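/- Precise delivery: under the credit protocol, a signal s emitted by n1 is consumed by n2 exactly when n2 has consumed all data items that n1 emitted prior to emitting s, and no data item emitted after s. That is, if the interleaved emission sequence of the sender is a list over {data, signal}, then for every reachable execution of the protocol, the interleaved consumption sequence of the receiver is a prefix of the sender's emission sequence (data items and signals are received in exactly the order they were emitted, interleaved). -/
import Mathlib


/-- Events exchanged between two streaming nodes: data items or signals. -/
inductive Ev
  | data (v : ℕ)
  | sig (id : ℕ)
deriving DecidableEq

/-- Full channel state between sender and receiver.
`emitted` is the sender's interleaved emission sequence,
`consumed` is the receiver's interleaved consumption sequence,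
`Q` is the FIFO data queue, `S` the FIFO signal queue (with credits),
`c` the receiver's credit counter, `k` the number of data items emitted
since the sender's last signal. -/
structure CState where
  emitted : List Ev
  consumed : List Ev
  Q : List ℕ
  S : List (ℕ × ℕ)
  c : ℕ
  k : ℕ

/-- Transitions of the credit protocol with explicit FIFO queues. -/
inductive CStep : CState → CState → Prop
  | emitData (s : CState) (v : ℕ) :
      CStep s { s with emitted := s.emitted ++ [.data v],
                       Q := s.Q ++ [v], k := s.k + 1 }
  | emitSignal (s : CState) (i : ℕ) :
      CStep s { s with emitted := s.emitted ++ [.sig i],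
                       S := s.S ++ [(i, if s.S = [] then s.Q.length else s.k)],
                       k := 0 }
  | consumeData (s : CState) (v : ℕ) (Q' : List ℕ)
      (hQ : s.Q = v :: Q') (h : s.S = [] ∨ 0 < s.c) :
      CStep s { s with consumed := s.consumed ++ [.data v], Q := Q',
                       c := if s.S = [] then s.c else s.c - 1 }
  | transfer (s : CState) (i h : ℕ) (S' : List (ℕ × ℕ))
      (hS : s.S = (i, h) :: S') (hc : s.c = 0) (hh : 0 < h) :
      CStep s { s with S := (i, 0) :: S', c := h }
  | consumeSignal (s : CState) (i : ℕ) (S' : List (ℕ × ℕ))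
      (hS : s.S = (i, 0) :: S') (hc : s.c = 0) :
      CStep s { s with consumed := s.consumed ++ [.sig i], S := S' }

/-- Initial state: nothing emitted, nothing consumed, empty queues. -/
def initC : CState := ⟨[], [], [], [], 0, 0⟩

def credits (S : List (ℕ × ℕ)) : ℕ := (S.map Prod.snd).sum

def pend : List ℕ → List (ℕ × ℕ) → List Ev
  | Q, [] => Q.map .data
  | Q, (i, h) :: S' => (Q.take h).map .data ++ .sig i :: pend (Q.drop h) S'

lemma pend_append_data (Q : List ℕ) (v : ℕ) (S : List (ℕ × ℕ))
    (h : credits S ≤ Q.length) : pend (Q ++ [v]) S = pend Q S ++ [.data v] := by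
  induction S generalizing Q with
  | nil => simp [pend]
  | cons p S' ih =>
    obtain ⟨i, hd⟩ := p
    have h1 : hd ≤ Q.length := le_trans (by simp [credits]) h
    have h2 : credits S' ≤ (Q.drop hd).length := by
      simp only [List.length_drop]
      simp [credits] at h ⊢; omega
    rw [pend, pend, List.take_append_of_le_length h1, List.drop_append_of_le_length h1,
      ih _ h2]
    simp

lemma pend_append_sig (Q : List ℕ) (S : List (ℕ × ℕ)) (i k : ℕ)
    (h : Q.length = credits S + k) :
    pend Q (S ++ [(i, k)]) = pend Q S ++ [.sig i] := by
  induction S generalizing Q with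
  | nil =>
    simp only [credits, List.map_nil, List.sum_nil, zero_add] at h
    simp [pend, ← h, List.take_length, List.drop_length]
  | cons p S' ih =>
    obtain ⟨j, hd⟩ := p
    have h2 : (Q.drop hd).length = credits S' + k := by
      simp only [List.length_drop]
      have : hd + credits S' + k = Q.length := by
        simp [credits] at h ⊢; omega
      omega
    rw [List.cons_append, pend, pend, ih _ h2]
    simp

def ProtoInv (s : CState) : Prop :=
  s.emitted = s.consumed ++ (s.Q.take s.c).map .data ++ pend (s.Q.drop s.c) s.S
  ∧ (s.S = [] → s.c = 0)
  ∧ (s.S ≠ [] → s.Q.length = s.c + credits s.S + s.k)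

lemma protoInv_step {s t : CState} (hs : ProtoInv s) (hst : CStep s t) : ProtoInv t := by
  obtain ⟨he, hA, hB⟩ := hs
  cases hst with
  | emitData v =>
    refine ⟨?_, fun h => hA h, fun h => by have := hB h; simp [credits] at *; omega⟩
    have hcle : s.c ≤ s.Q.length := by
      rcases eq_or_ne s.S [] with h | h
      · simp [hA h]
      · have := hB h; omega
    have hcr : credits s.S ≤ (s.Q.drop s.c).length := by
      rcases eq_or_ne s.S [] with h | h
      · simp [h, credits]
      · have := hB h; simp only [List.length_drop]; omega
    simp only [he]
    rw [List.take_append_of_le_length hcle, List.drop_append_of_le_length hcle,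
      pend_append_data _ _ _ hcr]
    simp
  | emitSignal i =>
    rcases eq_or_ne s.S [] with hSe | hSn
    · have hc0 := hA hSe
      refine ⟨?_, by simp, fun _ => by simp [hSe, credits, hc0]⟩
      simp only [he, hSe, hc0]
      simp [pend, List.take_length, List.drop_length]
    · have hlen := hB hSn
      refine ⟨?_, by simp, fun _ => by simp [credits, hSn] at hlen ⊢; omega⟩
      simp only [he, if_neg hSn]
      rw [pend_append_sig _ _ _ _ (by simp only [List.length_drop]; omega)]
      simp
  | consumeData v Q' hQ h =>
    rcases eq_or_ne s.S [] with hSe | hSn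
    · have hc0 := hA hSe
      refine ⟨?_, fun _ => by simp [if_pos hSe, hc0], fun hh => absurd hSe (by simpa [if_pos hSe] using hh)⟩
      simp only [he, hQ, hSe, if_pos rfl, hc0, pend, List.take_zero, List.drop_zero]
      simp
    · have hcpos : 0 < s.c := h.resolve_left hSn
      have hlen := hB hSn
      refine ⟨?_, fun hh => absurd hh hSn, fun _ => by
        simp only [if_neg hSn]; rw [hQ] at hlen; simp at hlen; omega⟩
      simp only [he, hQ, if_neg hSn]
      obtain ⟨c', hc'⟩ : ∃ c', s.c = c' + 1 := ⟨s.c - 1, by omega⟩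
      simp [hc', List.take_succ_cons, List.drop_succ_cons]
  | transfer i h S' hS hc hh =>
    have hlen := hB (by rw [hS]; simp)
    refine ⟨?_, by simp, fun _ => by
      rw [hS] at hlen; simp [credits] at hlen ⊢; omega⟩
    simp only [he, hS, hc, List.take_zero, List.drop_zero, pend]
    simp
  | consumeSignal i S' hS hc =>
    have hlen := hB (by rw [hS]; simp)
    refine ⟨?_, fun _ => hc, fun _ => by
      rw [hS] at hlen; simp [credits] at hlen ⊢; omega⟩
    simp only [he, hS, hc, List.take_zero, List.drop_zero, pend]
    simp

/-- precise delivery: in every reachable state of the credit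
protocol, the receiver's interleaved consumption sequence is a prefix of the
sender's interleaved emission sequence; in particular each signal is received
exactly after all data emitted before it and before any data emitted after it. -/
theorem precise_delivery (s : CState)
    (hreach : Relation.ReflTransGen CStep initC s) :
    s.consumed <+: s.emitted := by
  have hinv : ProtoInv s := by
    induction hreach with
    | refl => exact ⟨rfl, fun _ => rfl, fun h => absurd rfl h⟩
    | tail _ h ih => exact protoInv_step ih h
  rw [hinv.1, List.append_assoc]
  exact List.prefix_append _ _
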